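/- For every integer n ≥ 2, every real number y > 1, and all real numbers u_1, …, u_n ∈ (0,1) with u_1 + ⋯ + u_n = 1, one has 1/(y − 1) > ∑_{i=1}^n 1/(y^{1/u_i} − 1). -/
import Mathlib

/-- Lemma A.1: for `n ≥ 2`, `y > 1` and `u₁, …, uₙ ∈ (0,1)` summing to `1`,
`1/(y − 1) > ∑ᵢ 1/(y^(1/uᵢ) − 1)`. -/
theorem one_div_sub_one_gt_sum_rpow
    (n : ℕ) (hn : 2 ≤ n) (y : ℝ) (hy : 1 < y)
    (u : Fin n → ℝ) (hu : ∀ i, u i ∈ Set.Ioo (0 : ℝ) 1)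
    (hsum : ∑ i, u i = 1) :
    1 / (y - 1) > ∑ i, 1 / (y ^ (1 / u i) - 1) := by
  have hy1 : (0:ℝ) < y - 1 := by linarith
  have key : ∀ i, 1 / (y ^ (1 / u i) - 1) < u i / (y - 1) := by
    intro i
    obtain ⟨h0, h1⟩ := hu i
    have hp : 1 < 1 / u i := by rw [lt_div_iff₀ h0]; linarith
    have hb : 1 + (1 / u i) * (y - 1) < (1 + (y - 1)) ^ (1 / u i) :=
      one_add_mul_self_lt_rpow_one_add (by linarith) (by linarith) hp
    have hb' : (1 / u i) * (y - 1) < y ^ (1 / u i) - 1 := by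
      have : (1 + (y - 1)) = y := by ring
      rw [this] at hb; linarith
    have hpos : 0 < (1 / u i) * (y - 1) := by positivity
    have hpos2 : 0 < y ^ (1 / u i) - 1 := lt_trans hpos hb'
    have := one_div_lt_one_div_of_lt hpos hb'
    calc 1 / (y ^ (1 / u i) - 1) < 1 / ((1 / u i) * (y - 1)) := this
      _ = u i / (y - 1) := by field_simp
  calc ∑ i, 1 / (y ^ (1 / u i) - 1) < ∑ i, u i / (y - 1) := by
        apply Finset.sum_lt_sum_of_nonempty
        · exact Finset.univ_nonempty_iff.mpr (Fin.pos_iff_nonempty.mp (by omega))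
        · intro i _; exact key i
    _ = 1 / (y - 1) := by rw [← Finset.sum_div, hsum]
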